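/- Let A and B be extensors in Λ(V). Then Ā ⊆ B̄ if and only if ⋄₂₁^(1)(A ⊗ B) = 0, i.e. Σ_{(A)₍ₐ₋₁,₁₎} A₍₁₎ ⊗ A₍₂₎∧B = 0. -/

import Mathlib

open TensorProduct

/-- The ordered wedge product of the vectors `u t`, `t ∈ S` (in increasing order of index). -/
noncomputable def wedgeOn (K : Type*) {V : Type*} [CommRing K] [AddCommGroup V] [Module K V]
    {a : ℕ} (u : Fin a → V) (S : Finset (Fin a)) : ExteriorAlgebra K V :=
  ((S.sort (· ≤ ·)).map fun t => ExteriorAlgebra.ι K (u t)).prod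

/-- The shuffle sign of the coproduct slice `(Sᶜ, S)` of a word of length `a`. -/
def shuffleSign {a : ℕ} (S : Finset (Fin a)) : ℤ :=
  (-1) ^ (∑ i ∈ S, (Sᶜ.filter fun j => i < j).card)

/-- The raising geometric product `⋄₂₁^(h)(A ⊗ B) = Σ_{(A)₍ₐ₋ₕ,ₕ₎} A₍₁₎ ⊗ A₍₂₎B` for an
extensor `A = u 0 ∧ ⋯ ∧ u (a-1)` and `B ∈ Λ(V)`. -/
noncomputable def geom21 (K : Type*) {V : Type*} [CommRing K] [AddCommGroup V] [Module K V]
    (h : ℕ) {a : ℕ} (u : Fin a → V) (B : ExteriorAlgebra K V) :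
    ExteriorAlgebra K V ⊗[K] ExteriorAlgebra K V :=
  ∑ S ∈ Finset.powersetCard h Finset.univ,
    shuffleSign S • (wedgeOn K u Sᶜ ⊗ₜ[K] (wedgeOn K u S * B))

section Aux

section CommRing
variable {K V : Type*} [CommRing K] [AddCommGroup V] [Module K V] {a : ℕ}

theorem wedgeOn_singleton (u : Fin a → V) (i : Fin a) :
    wedgeOn K u {i} = ExteriorAlgebra.ι K (u i) := by
  simp [wedgeOn, Finset.sort_singleton]

theorem wedgeOn_congr {u v : Fin a → V} {S : Finset (Fin a)} (h : ∀ t ∈ S, u t = v t) :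
    wedgeOn K u S = wedgeOn K v S := by
  unfold wedgeOn
  congr 1
  refine List.map_congr_left fun t ht => ?_
  rw [h t ((Finset.mem_sort _).1 ht)]

theorem wedgeOn_eq_zero {u : Fin a → V} {S : Finset (Fin a)} {t : Fin a} (ht : t ∈ S)
    (h : u t = 0) : wedgeOn K u S = 0 := by
  refine List.prod_eq_zero ?_
  exact List.mem_map.2 ⟨t, (Finset.mem_sort _).2 ht, by rw [h, map_zero]⟩

theorem map_wedgeOn (g : V →ₗ[K] V) (u : Fin a → V) (S : Finset (Fin a)) :
    ExteriorAlgebra.map g (wedgeOn K u S) = wedgeOn K (g ∘ u) S := by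
  unfold wedgeOn
  rw [map_list_prod, List.map_map]
  refine congrArg List.prod (List.map_congr_left fun t _ => ?_)
  simp [Function.comp]

theorem wedgeOn_eq_ιMulti (u : Fin a → V) (S : Finset (Fin a)) :
    wedgeOn K u S =
      ExteriorAlgebra.ιMulti K (S.sort (· ≤ ·)).length
        (fun i => u ((S.sort (· ≤ ·)).get i)) := by
  rw [ExteriorAlgebra.ιMulti_apply, wedgeOn]
  conv_lhs => rw [← List.ofFn_get (S.sort (· ≤ ·))]
  rw [List.map_ofFn]
  rfl

theorem ι_mul_ιMulti (x : V) {b : ℕ} (w : Fin b → V) :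
    ExteriorAlgebra.ι K x * ExteriorAlgebra.ιMulti K b w
      = ExteriorAlgebra.ιMulti K (b + 1) (Fin.cons x w) := by
  rw [ExteriorAlgebra.ιMulti_succ_apply, Fin.cons_zero]
  congr 1

end CommRing

section Field
variable {K V : Type*} [Field K] [AddCommGroup V] [Module K V] {a : ℕ}

/-- Dual family to a linearly independent family. -/
theorem exists_dual_family {ι : Type*} [DecidableEq ι] (u : ι → V) (hu : LinearIndependent K u) :
    ∃ φ : ι → (V →ₗ[K] K), ∀ i j, φ i (u j) = if j = i then 1 else 0 := by
  set W := Submodule.span K (Set.range u)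
  obtain ⟨W', hW'⟩ := W.exists_isCompl
  let π := W.linearProjOfIsCompl W' hW'
  let bW : Module.Basis ι K W := Module.Basis.span hu
  refine ⟨fun i => (bW.coord i).comp (π : V →ₗ[K] W), fun i j => ?_⟩
  have hmem : u j ∈ W := Submodule.subset_span ⟨j, rfl⟩
  have hπ : π (u j) = ⟨u j, hmem⟩ := Submodule.linearProjOfIsCompl_apply_left hW' ⟨u j, hmem⟩
  have hb : (⟨u j, hmem⟩ : W) = bW j := by
    ext; exact congrArg Subtype.val (Module.Basis.span_apply hu j).symm
  simp only [LinearMap.comp_apply, LinearMap.coe_coe, hπ, hb, Module.Basis.coord_apply,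
    Module.Basis.repr_self_apply]

/-- The exterior product of a linearly independent family is nonzero. -/
theorem ιMulti_ne_zero {n : ℕ} (v : Fin n → V) (hv : LinearIndependent K v) :
    ExteriorAlgebra.ιMulti K n v ≠ 0 := by
  classical
  obtain ⟨φ, hφ⟩ := exists_dual_family v hv
  let L : V →ₗ[K] (Fin n → K) := LinearMap.pi fun j => φ j
  let f : V [⋀^Fin n]→ₗ[K] K := Matrix.detRowAlternating.compLinearMap L
  have hf : f v = 1 := by
    have h1 : (Matrix.of fun i => L (v i)) = (1 : Matrix (Fin n) (Fin n) K) := by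
      ext i j
      simp [L, LinearMap.pi_apply, hφ, Matrix.one_apply, eq_comm]
    have : f v = Matrix.det (Matrix.of fun i => L (v i)) := rfl
    rw [this, h1, Matrix.det_one]
  intro h0
  let F : ∀ i, V [⋀^Fin i]→ₗ[K] K := Function.update (fun _ => 0) n f
  have hF := congrArg (ExteriorAlgebra.liftAlternating F) h0
  rw [map_zero, ExteriorAlgebra.liftAlternating_apply_ιMulti] at hF
  simp only [F, Function.update_self] at hF
  rw [hf] at hF
  exact one_ne_zero hF

theorem wedgeOn_ne_zero {u : Fin a → V} (hu : LinearIndependent K u) (S : Finset (Fin a)) :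
    wedgeOn K u S ≠ 0 := by
  rw [wedgeOn_eq_ιMulti]
  refine ιMulti_ne_zero _ (hu.comp _ ?_)
  exact (List.nodup_iff_injective_get).1 (S.sort_nodup (· ≤ ·))

theorem ι_mul_ιMulti_eq_zero_iff {b : ℕ} {w : Fin b → V} (hw : LinearIndependent K w) (x : V) :
    ExteriorAlgebra.ι K x * ExteriorAlgebra.ιMulti K b w = 0
      ↔ x ∈ Submodule.span K (Set.range w) := by
  rw [ι_mul_ιMulti]
  constructor
  · intro h
    by_contra hx
    exact ιMulti_ne_zero _ (linearIndependent_fin_cons.2 ⟨hw, hx⟩) h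
  · intro hx
    exact AlternatingMap.map_linearDependent _ _
      (fun hlin => (linearIndependent_fin_cons.1 hlin).2 hx)

/-- `x ⊗ y = 0` with `x ≠ 0` implies `y = 0`, over a field. -/
theorem tmul_right_eq_zero {E F : Type*} [AddCommGroup E] [Module K E] [AddCommGroup F]
    [Module K F] {x : E} {y : F} (h : x ⊗ₜ[K] y = 0) (hx : x ≠ 0) : y = 0 := by
  obtain ⟨φ, hφ⟩ : ∃ φ : Module.Dual K E, φ x ≠ 0 := by
    by_contra hc
    push_neg at hc
    exact hx ((Module.forall_dual_apply_eq_zero_iff K x).1 hc)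
  have := congrArg (TensorProduct.lift ((LinearMap.lsmul K F).comp φ)) h
  rw [map_zero, TensorProduct.lift.tmul] at this
  simpa [hφ] using this

end Field

end Aux

/-- `Ā ⊆ B̄` if and only if `⋄₂₁^(1)(A ⊗ B) = 0`. -/
theorem stmt2 {K V : Type*} [Field K] [AddCommGroup V] [Module K V] [FiniteDimensional K V]
    {a b : ℕ} (u : Fin a → V) (w : Fin b → V)
    (hu : LinearIndependent K u) (hw : LinearIndependent K w) :
    Submodule.span K (Set.range u) ≤ Submodule.span K (Set.range w) ↔
      geom21 K 1 u (ExteriorAlgebra.ιMulti K b w) = 0 := by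
  classical
  set B := ExteriorAlgebra.ιMulti K b w with hB
  have hgeom : geom21 K 1 u B = ∑ i : Fin a,
      shuffleSign {i} • (wedgeOn K u {i}ᶜ ⊗ₜ[K] (ExteriorAlgebra.ι K (u i) * B)) := by
    rw [geom21, Finset.powersetCard_one, Finset.sum_map]
    simp only [Function.Embedding.coeFn_mk, wedgeOn_singleton]
  constructor
  · intro h
    rw [hgeom]
    refine Finset.sum_eq_zero fun i _ => ?_
    rw [(ι_mul_ιMulti_eq_zero_iff hw (u i)).2 (h (Submodule.subset_span ⟨i, rfl⟩)),
      tmul_zero, smul_zero]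
  · intro h
    rw [Submodule.span_le]
    rintro x ⟨i₀, rfl⟩
    rw [SetLike.mem_coe]
    obtain ⟨φ, hφ⟩ := exists_dual_family u hu
    set g : V →ₗ[K] V := LinearMap.id - (φ i₀).smulRight (u i₀) with hgdef
    have hg : ∀ j, g (u j) = if j = i₀ then 0 else u j := by
      intro j
      rw [hgdef]
      simp only [LinearMap.sub_apply, LinearMap.id_apply, LinearMap.smulRight_apply, hφ]
      by_cases hj : j = i₀ <;> simp [hj]
    set Φ : ExteriorAlgebra K V ⊗[K] ExteriorAlgebra K V →ₗ[K]
        ExteriorAlgebra K V ⊗[K] ExteriorAlgebra K V :=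
      TensorProduct.map (ExteriorAlgebra.map g).toLinearMap LinearMap.id with hΦ
    have h2 : Φ (geom21 K 1 u B) = 0 := by rw [h, map_zero]
    rw [hgeom, map_sum] at h2
    have h3 : ∀ i ∈ Finset.univ, i ≠ i₀ →
        Φ (shuffleSign {i} • (wedgeOn K u {i}ᶜ ⊗ₜ[K] (ExteriorAlgebra.ι K (u i) * B))) = 0 := by
      intro i _ hi
      have hz : ExteriorAlgebra.map g (wedgeOn K u {i}ᶜ) = 0 := by
        rw [map_wedgeOn]
        refine wedgeOn_eq_zero (t := i₀) ?_ ?_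
        · simp [Finset.mem_compl, Ne.symm hi]
        · simp [Function.comp, hg i₀]
      rw [map_zsmul, hΦ, TensorProduct.map_tmul]
      simp only [AlgHom.toLinearMap_apply, hz, zero_tmul, smul_zero]
    rw [Finset.sum_eq_single_of_mem i₀ (Finset.mem_univ i₀) h3] at h2
    rw [map_zsmul, hΦ, TensorProduct.map_tmul] at h2
    simp only [AlgHom.toLinearMap_apply, LinearMap.id_coe, id_eq] at h2
    rw [map_wedgeOn] at h2
    have hcongr : wedgeOn K (⇑g ∘ u) {i₀}ᶜ = wedgeOn K u {i₀}ᶜ :=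
      wedgeOn_congr (fun t ht => by
        have hti : t ≠ i₀ := by simpa [Finset.mem_compl] using ht
        simp [Function.comp, hg t, hti])
    rw [hcongr] at h2
    obtain hs | hs : shuffleSign ({i₀} : Finset (Fin a)) = 1 ∨
        shuffleSign ({i₀} : Finset (Fin a)) = -1 := by
      rw [shuffleSign]
      exact (Nat.even_or_odd _).imp (fun h => h.neg_one_pow) (fun h => h.neg_one_pow)
    all_goals rw [hs] at h2
    · exact (ι_mul_ιMulti_eq_zero_iff hw (u i₀)).1
        (tmul_right_eq_zero (by simpa using h2) (wedgeOn_ne_zero hu _))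
    · exact (ι_mul_ιMulti_eq_zero_iff hw (u i₀)).1
        (tmul_right_eq_zero (by simpa using h2) (wedgeOn_ne_zero hu _))
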